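/- arXiv:2008.13360 — 4 statements merged into one kernel-verified Lean document; each statement's English description precedes it below -/
import Mathlib

section
/- The function p : ℕ → ℝ defined for k ≥ 1 by P(X=k) = (1 - k/(p+k)) · ∏_{i=1}^{k-1} i/(p+i), for a fixed real parameter p > 0, is a probability mass function: all values are nonnegative and they sum to 1 over k = 1, 2, .... -/
open Finset Filter Topology

/-- The `p`-th order discrete fractional power law distribution
`f k = (1 - k/(p+k)) · ∏_{i=1}^{k-1} i/(p+i)` (for `k ≥ 1`) is a probability
mass function: all values nonnegative and summing to 1. -/
theorem fractional_power_law_is_pmf (p : ℝ) (hp : 0 < p) :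
    (∀ k : ℕ, 1 ≤ k →
      0 ≤ (1 - (k : ℝ) / (p + k)) * ∏ i ∈ Finset.Icc 1 (k - 1), (i : ℝ) / (p + i)) ∧
    HasSum (fun k : ℕ =>
      (1 - ((k + 1 : ℕ) : ℝ) / (p + (k + 1 : ℕ))) *
        ∏ i ∈ Finset.Icc 1 k, (i : ℝ) / (p + i)) 1 := by
  have hpk : ∀ k : ℕ, (0:ℝ) < p + k := fun k => by positivity
  set g : ℕ → ℝ := fun n => ∏ i ∈ Finset.Icc 1 n, (i : ℝ) / (p + i) with hg
  have hgnonneg : ∀ n, 0 ≤ g n := fun n =>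
    Finset.prod_nonneg fun i _ => div_nonneg (Nat.cast_nonneg i) (hpk i).le
  have hone : ∀ k : ℕ, (0:ℝ) ≤ 1 - (k : ℝ) / (p + k) := by
    intro k
    have : (k : ℝ) / (p + k) ≤ 1 := by
      rw [div_le_one (hpk k)]; linarith
    linarith
  have hnn : ∀ k : ℕ, 0 ≤ (1 - ((k+1 : ℕ) : ℝ) / (p + (k+1 : ℕ))) * g k :=
    fun k => mul_nonneg (hone (k+1)) (hgnonneg k)
  constructor
  · intro k hk
    exact mul_nonneg (hone k) (Finset.prod_nonneg fun i _ =>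
      div_nonneg (Nat.cast_nonneg i) (hpk i).le)
  · have hg0 : g 0 = 1 := by simp [hg]
    have hsucc : ∀ k : ℕ, g (k+1) = g k * (((k:ℝ)+1) / (p + ((k:ℝ)+1))) := by
      intro k
      simp only [hg]
      rw [Finset.prod_Icc_succ_top (Nat.one_le_iff_ne_zero.mpr (Nat.succ_ne_zero k))]
      push_cast
      ring
    have hterm : ∀ k : ℕ,
        (1 - ((k+1 : ℕ) : ℝ) / (p + (k+1 : ℕ))) * g k = g k - g (k+1) := by
      intro k
      rw [hsucc k]
      push_cast
      ring
    have hpartial : ∀ n : ℕ,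
        ∑ k ∈ Finset.range n, (1 - ((k+1 : ℕ) : ℝ) / (p + (k+1 : ℕ))) * g k
          = 1 - g n := by
      intro n
      calc ∑ k ∈ Finset.range n, (1 - ((k+1 : ℕ) : ℝ) / (p + (k+1 : ℕ))) * g k
          = ∑ k ∈ Finset.range n, (g k - g (k+1)) := by
            exact Finset.sum_congr rfl fun k _ => hterm k
        _ = g 0 - g n := Finset.sum_range_sub' g n
        _ = 1 - g n := by rw [hg0]
    -- bound : g n * (1 + p * H n) ≤ 1
    set H : ℕ → ℝ := fun n => ∑ i ∈ Finset.range n, (1:ℝ)/(i+1) with hH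
    have hHnn : ∀ n, 0 ≤ H n := fun n =>
      Finset.sum_nonneg fun i _ => by positivity
    have hbound : ∀ n, g n * (1 + p * H n) ≤ 1 := by
      intro n
      induction n with
      | zero => simp [hg0, hH]
      | succ n ih =>
        have hHs : H (n+1) = H n + 1/((n:ℝ)+1) := by
          simp only [hH]; rw [Finset.sum_range_succ]
        rw [hsucc n, hHs]
        have key : ((n:ℝ)+1) / (p + ((n:ℝ)+1)) * (1 + p * (H n + 1/((n:ℝ)+1)))
            ≤ 1 + p * H n := by
          rw [div_mul_eq_mul_div, div_le_iff₀ (by positivity)]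
          have h1 : (0:ℝ) < (n:ℝ) + 1 := by positivity
          have h2 : 0 ≤ p * p * H n := by positivity
          field_simp
          nlinarith [hHnn n]
        calc g n * (((n:ℝ)+1) / (p + ((n:ℝ)+1))) * (1 + p * (H n + 1/((n:ℝ)+1)))
            = g n * ((((n:ℝ)+1) / (p + ((n:ℝ)+1))) * (1 + p * (H n + 1/((n:ℝ)+1)))) := by
              ring
          _ ≤ g n * (1 + p * H n) := by
              exact mul_le_mul_of_nonneg_left key (hgnonneg n)
          _ ≤ 1 := ih
    have hgle : ∀ n, g n ≤ (1 + p * H n)⁻¹ := by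
      intro n
      have hpos : (0:ℝ) < 1 + p * H n := by nlinarith [hHnn n]
      rw [inv_eq_one_div]
      exact (le_div_iff₀ hpos).mpr (hbound n)
    have hHtop : Tendsto H atTop atTop := by
      have := Real.tendsto_sum_range_one_div_nat_succ_atTop
      simpa [hH] using this
    have htop : Tendsto (fun n => 1 + p * H n) atTop atTop :=
      tendsto_atTop_add_const_left _ 1 (Tendsto.const_mul_atTop hp hHtop)
    have hinv : Tendsto (fun n => (1 + p * H n)⁻¹) atTop (𝓝 0) :=
      htop.inv_tendsto_atTop
    have hgzero : Tendsto g atTop (𝓝 0) :=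
      tendsto_of_tendsto_of_tendsto_of_le_of_le tendsto_const_nhds hinv hgnonneg hgle
    rw [hasSum_iff_tendsto_nat_of_nonneg hnn]
    have : Tendsto (fun n => 1 - g n) atTop (𝓝 (1 - 0)) :=
      tendsto_const_nhds.sub hgzero
    simp only [sub_zero] at this
    refine Tendsto.congr (fun n => (hpartial n).symm) this
end

section
/- Let X be a random variable taking values in the nonnegative integers, and let S, S₁, S₂, … be nonnegative random variables each with the same marginal distribution as S, possibly correlated among themselves but with the sequence (S_i) independent of X. If E[S^p] < ∞ and E[X^{1/p}] < ∞ for some real p ≥ 1, then E[max_{1≤i≤X} S_i] ≤ (E[S^p])^{1/p} · E[X^{1/p}], where the maximum over an empty index set is 0. -/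
open MeasureTheory ProbabilityTheory
open scoped ENNReal NNReal

/-- A bounded `iSup` over a finset of nonnegative reals equals the coercion of the
`Finset.sup` of the corresponding `ℝ≥0` values. -/
lemma real_biSup_finset_eq (s : Finset ℕ) (g : ℕ → ℝ) (hg : ∀ i, 0 ≤ g i) :
    (⨆ i ∈ s, g i) = ((s.sup fun i => (g i).toNNReal : ℝ≥0) : ℝ) := by
  set R : ℝ := ((s.sup fun i => (g i).toNNReal : ℝ≥0) : ℝ) with hR
  have hle : ∀ i : ℕ, (⨆ _ : i ∈ s, g i) ≤ R := by
    intro i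
    by_cases hi : i ∈ s
    · rw [ciSup_pos hi]
      calc g i = ((g i).toNNReal : ℝ) := (Real.coe_toNNReal _ (hg i)).symm
        _ ≤ R := NNReal.coe_le_coe.2 (Finset.le_sup (f := fun i => (g i).toNNReal) hi)
    · haveI : IsEmpty (i ∈ s) := ⟨hi⟩
      rw [Real.iSup_of_isEmpty]
      exact NNReal.coe_nonneg _
  have hbdd : BddAbove (Set.range fun i => ⨆ _ : i ∈ s, g i) := by
    refine ⟨R, ?_⟩
    rintro x ⟨i, rfl⟩
    exact hle i
  refine le_antisymm (ciSup_le hle) ?_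
  have hnn : (0 : ℝ) ≤ ⨆ i, ⨆ _ : i ∈ s, g i := by
    refine le_ciSup_of_le hbdd 0 ?_
    by_cases h0 : 0 ∈ s
    · rw [ciSup_pos h0]; exact hg 0
    · haveI : IsEmpty ((0 : ℕ) ∈ s) := ⟨h0⟩
      rw [Real.iSup_of_isEmpty]
  rw [hR, ← Real.coe_toNNReal (⨆ i, ⨆ _ : i ∈ s, g i) hnn]
  refine NNReal.coe_le_coe.2 (Finset.sup_le fun i hi => Real.toNNReal_le_toNNReal ?_)
  exact le_ciSup_of_le hbdd i (by rw [ciSup_pos hi])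

lemma ofReal_biSup_finset (s : Finset ℕ) (g : ℕ → ℝ) (hg : ∀ i, 0 ≤ g i) :
    ENNReal.ofReal (⨆ i ∈ s, g i) = ⨆ i ∈ s, ENNReal.ofReal (g i) := by
  rw [real_biSup_finset_eq s g hg, ENNReal.ofReal_coe_nnreal, ENNReal.coe_finset_sup,
    Finset.sup_eq_iSup]
  rfl

/-- Jensen-type inequality for `1/p`-th powers under a probability measure. -/
lemma lintegral_rpow_one_div_le {Ω : Type*} [MeasureSpace Ω]
    [IsProbabilityMeasure (ℙ : Measure Ω)] {p : ℝ} (hp : 1 ≤ p) {h : Ω → ℝ≥0∞}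
    (hm : Measurable h) :
    ∫⁻ ω, (h ω) ^ (1 / p) ∂ℙ ≤ (∫⁻ ω, h ω ∂ℙ) ^ (1 / p) := by
  have hp0 : p ≠ 0 := by positivity
  rcases eq_or_lt_of_le hp with heq | hlt
  · simp [← heq]
  · have hpq := Real.HolderConjugate.conjExponent hlt
    have key := ENNReal.lintegral_mul_le_Lp_mul_Lq (ℙ : Measure Ω) hpq
      ((hm.pow_const (1 / p)).aemeasurable) (aemeasurable_const (b := (1 : ℝ≥0∞)))
    simp only [Pi.mul_apply, mul_one, ENNReal.one_rpow, lintegral_const, measure_univ,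
      one_mul] at key
    calc ∫⁻ ω, (h ω) ^ (1 / p) ∂ℙ
        ≤ (∫⁻ ω, ((h ω) ^ (1 / p)) ^ p ∂ℙ) ^ (1 / p) * (1 : ℝ≥0∞) ^ (1 / p.conjExponent) :=
          by simpa using key
      _ = (∫⁻ ω, h ω ∂ℙ) ^ (1 / p) := by
          rw [ENNReal.one_rpow, mul_one]
          congr 1
          refine lintegral_congr fun ω => ?_
          rw [← ENNReal.rpow_mul, one_div, inv_mul_cancel₀ hp0, ENNReal.rpow_one]

/-- Let `X` be a nonnegative-integer-valued random variable and `S, S₁, S₂, …`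
nonnegative random variables with the same marginal law as `S`, possibly correlated
among themselves but with the sequence `(Sᵢ)` independent of `X`.  If `E[S^p] < ∞`
and `E[X^{1/p}] < ∞` for a real `p ≥ 1`, then
`E[max_{1≤i≤X} Sᵢ] ≤ (E[S^p])^{1/p} · E[X^{1/p}]` (the max over an empty index
set being `0`). -/
theorem expectation_random_max_bound {Ω : Type*} [MeasureSpace Ω]
    [IsProbabilityMeasure (ℙ : Measure Ω)]
    (p : ℝ) (hp : 1 ≤ p)
    (X : Ω → ℕ) (S₀ : Ω → ℝ) (S : ℕ → Ω → ℝ)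
    (hXm : Measurable X) (hS₀m : Measurable S₀) (hSm : ∀ i, Measurable (S i))
    (hS₀nn : ∀ ω, 0 ≤ S₀ ω) (hSnn : ∀ i ω, 0 ≤ S i ω)
    (hid : ∀ i, Measure.map (S i) ℙ = Measure.map S₀ ℙ)
    (hindep : IndepFun X (fun ω => (fun i => S i ω : ℕ → ℝ)) ℙ)
    (hintS : Integrable (fun ω => (S₀ ω) ^ p) ℙ)
    (hintX : Integrable (fun ω => ((X ω : ℝ)) ^ (1 / p)) ℙ) :
    ∫ ω, (⨆ i ∈ Finset.Icc 1 (X ω), S i ω) ∂ℙ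
      ≤ (∫ ω, (S₀ ω) ^ p ∂ℙ) ^ (1 / p) * ∫ ω, ((X ω : ℝ)) ^ (1 / p) ∂ℙ := by
  have hppos : (0 : ℝ) < p := lt_of_lt_of_le one_pos hp
  have hp0 : p ≠ 0 := hppos.ne'
  have hpinv : (0 : ℝ) ≤ 1 / p := by positivity
  -- ENNReal-valued auxiliary functions
  set G : ℕ → Ω → ℝ≥0∞ := fun i ω => ENNReal.ofReal (S i ω) with hG
  set M : ℕ → Ω → ℝ≥0∞ := fun n ω => ⨆ i ∈ Finset.Icc 1 n, G i ω with hM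
  set F : Ω → ℝ≥0∞ := fun ω => M (X ω) ω with hF
  have hGm : ∀ i, Measurable (G i) := fun i => (hSm i).ennreal_ofReal
  have hMm : ∀ n, Measurable (M n) := fun n =>
    Measurable.iSup fun i => Measurable.iSup fun _ => hGm i
  -- pointwise identity between the real sup and the ENNReal sup
  have hpt : ∀ ω, ENNReal.ofReal (⨆ i ∈ Finset.Icc 1 (X ω), S i ω) = F ω := fun ω =>
    ofReal_biSup_finset _ _ fun i => hSnn i ω
  have hfnn : ∀ ω, (0 : ℝ) ≤ ⨆ i ∈ Finset.Icc 1 (X ω), S i ω := by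
    intro ω
    rw [real_biSup_finset_eq _ _ fun i => hSnn i ω]
    exact NNReal.coe_nonneg _
  -- measurability of F
  have hFm : Measurable F := by
    have hFeq : F = fun ω => ⨆ i, Set.indicator {ω' | i ∈ Finset.Icc 1 (X ω')}
        (fun ω' => G i ω') ω := by
      funext ω
      refine iSup_congr fun i => ?_
      by_cases hi : i ∈ Finset.Icc 1 (X ω)
      · rw [iSup_pos hi, Set.indicator_of_mem
          (show ω ∈ {ω' | i ∈ Finset.Icc 1 (X ω')} from hi)]
      · rw [iSup_neg hi, Set.indicator_of_notMem
          (show ω ∉ {ω' | i ∈ Finset.Icc 1 (X ω')} from hi)]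
        rfl
    rw [hFeq]
    refine Measurable.iSup fun i => (hGm i).indicator ?_
    have : {ω' | i ∈ Finset.Icc 1 (X ω')} = if 1 ≤ i then X ⁻¹' Set.Ici i else ∅ := by
      ext ω'
      by_cases h1 : 1 ≤ i <;> simp [Finset.mem_Icc, h1]
    rw [this]
    split_ifs
    · exact hXm measurableSet_Ici
    · exact MeasurableSet.empty
  -- the two lintegral quantities
  set A : ℝ≥0∞ := ∫⁻ ω, ENNReal.ofReal ((S₀ ω) ^ p) ∂ℙ with hA
  set B : ℝ≥0∞ := ∫⁻ ω, ENNReal.ofReal (((X ω : ℝ)) ^ (1 / p)) ∂ℙ with hB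
  have hS0p_nn : ∀ ω, 0 ≤ (S₀ ω) ^ p := fun ω => Real.rpow_nonneg (hS₀nn ω) p
  have hXp_nn : ∀ ω, 0 ≤ ((X ω : ℝ)) ^ (1 / p) := fun ω =>
    Real.rpow_nonneg (Nat.cast_nonneg _) _
  have hS0pm : Measurable fun ω => (S₀ ω) ^ p := hS₀m.pow_const p
  have hXpm : Measurable fun ω => ((X ω : ℝ)) ^ (1 / p) :=
    (measurable_from_top.comp hXm : Measurable fun ω => ((X ω : ℕ) : ℝ)).pow_const (1 / p)
  have hAne : A ≠ ∞ := by
    have := hintS.hasFiniteIntegral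
    rw [HasFiniteIntegral] at this
    refine ne_of_lt (lt_of_le_of_lt (le_of_eq ?_) this)
    refine lintegral_congr fun ω => ?_
    rw [← Real.enorm_eq_ofReal (hS0p_nn ω)]
  have hBne : B ≠ ∞ := by
    have := hintX.hasFiniteIntegral
    rw [HasFiniteIntegral] at this
    refine ne_of_lt (lt_of_le_of_lt (le_of_eq ?_) this)
    refine lintegral_congr fun ω => ?_
    rw [← Real.enorm_eq_ofReal (hXp_nn ω)]
  -- expressing the real integrals through lintegrals
  have hAeq : ∫ ω, (S₀ ω) ^ p ∂ℙ = A.toReal := by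
    rw [integral_eq_lintegral_of_nonneg_ae (Filter.Eventually.of_forall hS0p_nn)
      hS0pm.aestronglyMeasurable]
  have hBeq : ∫ ω, ((X ω : ℝ)) ^ (1 / p) ∂ℙ = B.toReal := by
    rw [integral_eq_lintegral_of_nonneg_ae (Filter.Eventually.of_forall hXp_nn)
      hXpm.aestronglyMeasurable]
  have hfeq : ∫ ω, (⨆ i ∈ Finset.Icc 1 (X ω), S i ω) ∂ℙ = (∫⁻ ω, F ω ∂ℙ).toReal := by
    have hmeas : AEStronglyMeasurable (fun ω => ⨆ i ∈ Finset.Icc 1 (X ω), S i ω) ℙ := by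
      have : (fun ω => ⨆ i ∈ Finset.Icc 1 (X ω), S i ω) = fun ω => (F ω).toReal := by
        funext ω
        rw [← hpt ω, ENNReal.toReal_ofReal (hfnn ω)]
      rw [this]
      exact (ENNReal.measurable_toReal.comp hFm).aestronglyMeasurable
    rw [integral_eq_lintegral_of_nonneg_ae (Filter.Eventually.of_forall hfnn) hmeas]
    congr 1
    exact lintegral_congr hpt
  -- partition of the lintegral of F according to the value of X
  have hXms : ∀ n : ℕ, MeasurableSet (X ⁻¹' {n}) := fun n => hXm (measurableSet_singleton n)
  have hpart : ∫⁻ ω, F ω ∂ℙ = ∑' n : ℕ, ∫⁻ ω in X ⁻¹' {n}, F ω ∂ℙ := by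
    have hU : (⋃ n : ℕ, X ⁻¹' {n}) = Set.univ := by
      ext ω; simp
    rw [← setLIntegral_univ, ← hU,
      lintegral_iUnion hXms (fun m n hmn => (Set.disjoint_singleton.2 hmn).preimage X) F]
  -- on each piece, use independence
  have hseqm : Measurable fun ω => (fun i => S i ω : ℕ → ℝ) :=
    measurable_pi_lambda _ fun i => hSm i
  have hslice : ∀ n : ℕ, ∫⁻ ω in X ⁻¹' {n}, F ω ∂ℙ
      = ℙ (X ⁻¹' {n}) * ∫⁻ ω, M n ω ∂ℙ := by
    intro n
    have h1 : ∫⁻ ω in X ⁻¹' {n}, F ω ∂ℙ = ∫⁻ ω in X ⁻¹' {n}, M n ω ∂ℙ := by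
      refine setLIntegral_congr_fun (hXms n) (fun ω hω => ?_)
      have : X ω = n := hω
      rw [hF]
      simp only
      rw [this]
    rw [h1]
    set φ : ℕ → ℝ≥0∞ := fun k => if k = n then 1 else 0 with hφ
    set ψ : (ℕ → ℝ) → ℝ≥0∞ := fun v => ⨆ i ∈ Finset.Icc 1 n, ENNReal.ofReal (v i) with hψ
    have hφm : Measurable φ := measurable_from_top
    have hψm : Measurable ψ :=
      Measurable.iSup fun i => Measurable.iSup fun _ => (measurable_pi_apply i).ennreal_ofReal
    have hcomp : IndepFun (φ ∘ X) (ψ ∘ fun ω => (fun i => S i ω : ℕ → ℝ)) ℙ :=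
      hindep.comp hφm hψm
    have hkey := lintegral_mul_eq_lintegral_mul_lintegral_of_indepFun''
      ((hφm.comp hXm).aemeasurable) ((hψm.comp hseqm).aemeasurable) hcomp
    have hψS : ∀ ω, (ψ ∘ fun ω => (fun i => S i ω : ℕ → ℝ)) ω = M n ω := fun ω => rfl
    have hL : ∫⁻ ω, (φ ∘ X) ω * (ψ ∘ fun ω => (fun i => S i ω : ℕ → ℝ)) ω ∂ℙ
        = ∫⁻ ω in X ⁻¹' {n}, M n ω ∂ℙ := by
      rw [← lintegral_indicator (hXms n)]
      refine lintegral_congr fun ω => ?_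
      rw [hψS ω]
      by_cases hω : X ω = n
      · have hmem : ω ∈ X ⁻¹' {n} := hω
        rw [Set.indicator_of_mem hmem]
        simp [hφ, hω]
      · have hmem : ω ∉ X ⁻¹' {n} := hω
        rw [Set.indicator_of_notMem hmem]
        simp [hφ, hω]
    have hR1 : ∫⁻ ω, (φ ∘ X) ω ∂ℙ = ℙ (X ⁻¹' {n}) := by
      have : (φ ∘ X) = (X ⁻¹' {n}).indicator (fun _ => (1 : ℝ≥0∞)) := by
        funext ω
        by_cases hω : X ω = n
        · have hmem : ω ∈ X ⁻¹' {n} := hω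
          rw [Set.indicator_of_mem hmem]
          simp [hφ, hω]
        · have hmem : ω ∉ X ⁻¹' {n} := hω
          rw [Set.indicator_of_notMem hmem]
          simp [hφ, hω]
      rw [this, lintegral_indicator (hXms n)]
      simp
    have hR2 : ∫⁻ ω, (ψ ∘ fun ω => (fun i => S i ω : ℕ → ℝ)) ω ∂ℙ = ∫⁻ ω, M n ω ∂ℙ :=
      lintegral_congr hψS
    rw [← hL, hkey, hR1, hR2]
  -- bound the expected max of n variables
  have hMbound : ∀ n : ℕ, ∫⁻ ω, M n ω ∂ℙ ≤ ((n : ℝ≥0∞) * A) ^ (1 / p) := by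
    intro n
    have hptw : ∀ ω, M n ω ≤ (∑ i ∈ Finset.Icc 1 n, (G i ω) ^ p) ^ (1 / p) := by
      intro ω
      refine iSup₂_le fun i hi => ?_
      have h1 : G i ω = ((G i ω) ^ p) ^ (1 / p) := by
        rw [← ENNReal.rpow_mul, mul_one_div, div_self hp0, ENNReal.rpow_one]
      rw [h1]
      exact ENNReal.rpow_le_rpow (Finset.single_le_sum (f := fun j => G j ω ^ p) (fun j _ => zero_le) hi) hpinv
    have hsumm : Measurable fun ω => ∑ i ∈ Finset.Icc 1 n, (G i ω) ^ p :=
      Finset.measurable_sum _ fun i _ => (hGm i).pow_const p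
    have hiA : ∀ i : ℕ, ∫⁻ ω, (G i ω) ^ p ∂ℙ = A := by
      intro i
      have h1 : ∀ ω, (G i ω) ^ p = ENNReal.ofReal ((S i ω) ^ p) := fun ω =>
        ENNReal.ofReal_rpow_of_nonneg (hSnn i ω) hppos.le
      simp only [h1]
      have hmeas : Measurable fun x : ℝ => ENNReal.ofReal (x ^ p) :=
        (measurable_id.pow_const p).ennreal_ofReal
      calc ∫⁻ ω, ENNReal.ofReal ((S i ω) ^ p) ∂ℙ
          = ∫⁻ x, ENNReal.ofReal (x ^ p) ∂(Measure.map (S i) ℙ) :=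
            (lintegral_map hmeas (hSm i)).symm
        _ = ∫⁻ x, ENNReal.ofReal (x ^ p) ∂(Measure.map S₀ ℙ) := by rw [hid i]
        _ = A := lintegral_map hmeas hS₀m
    calc ∫⁻ ω, M n ω ∂ℙ
        ≤ ∫⁻ ω, (∑ i ∈ Finset.Icc 1 n, (G i ω) ^ p) ^ (1 / p) ∂ℙ := lintegral_mono hptw
      _ ≤ (∫⁻ ω, ∑ i ∈ Finset.Icc 1 n, (G i ω) ^ p ∂ℙ) ^ (1 / p) :=
          lintegral_rpow_one_div_le hp hsumm
      _ = ((n : ℝ≥0∞) * A) ^ (1 / p) := by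
          rw [lintegral_finset_sum _ fun i _ => (hGm i).pow_const p]
          congr 1
          rw [Finset.sum_congr rfl fun i _ => hiA i, Finset.sum_const, Nat.card_Icc]
          simp [nsmul_eq_mul]
  -- identify B with the weighted sum
  have hBsum : B = ∑' n : ℕ, ℙ (X ⁻¹' {n}) * ((n : ℝ≥0∞)) ^ (1 / p) := by
    have hU : (⋃ n : ℕ, X ⁻¹' {n}) = Set.univ := by
      ext ω; simp
    rw [hB, ← setLIntegral_univ, ← hU,
      lintegral_iUnion hXms (fun m n hmn => (Set.disjoint_singleton.2 hmn).preimage X)]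
    refine tsum_congr fun n => ?_
    have : ∫⁻ ω in X ⁻¹' {n}, ENNReal.ofReal (((X ω : ℝ)) ^ (1 / p)) ∂ℙ
        = ∫⁻ _ in X ⁻¹' {n}, ENNReal.ofReal (((n : ℝ)) ^ (1 / p)) ∂ℙ := by
      refine setLIntegral_congr_fun (hXms n) (fun ω hω => ?_)
      have : X ω = n := hω
      rw [this]
    rw [this, setLIntegral_const, ← ENNReal.ofReal_rpow_of_nonneg (Nat.cast_nonneg n) hpinv,
      ENNReal.ofReal_natCast, mul_comm]
  -- main chain in ℝ≥0∞
  have hmain : ∫⁻ ω, F ω ∂ℙ ≤ A ^ (1 / p) * B := by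
    calc ∫⁻ ω, F ω ∂ℙ = ∑' n : ℕ, ℙ (X ⁻¹' {n}) * ∫⁻ ω, M n ω ∂ℙ := by
          rw [hpart]; exact tsum_congr hslice
      _ ≤ ∑' n : ℕ, ℙ (X ⁻¹' {n}) * ((n : ℝ≥0∞) * A) ^ (1 / p) :=
          ENNReal.tsum_le_tsum fun n => mul_le_mul_right (hMbound n) _
      _ = ∑' n : ℕ, (ℙ (X ⁻¹' {n}) * ((n : ℝ≥0∞)) ^ (1 / p)) * A ^ (1 / p) := by
          refine tsum_congr fun n => ?_
          rw [ENNReal.mul_rpow_of_nonneg _ _ hpinv, mul_assoc]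
      _ = B * A ^ (1 / p) := by rw [ENNReal.tsum_mul_right, ← hBsum]
      _ = A ^ (1 / p) * B := mul_comm _ _
  -- conclude in ℝ
  have hRne : A ^ (1 / p) * B ≠ ∞ :=
    ENNReal.mul_ne_top (ENNReal.rpow_ne_top_of_nonneg hpinv hAne) hBne
  calc ∫ ω, (⨆ i ∈ Finset.Icc 1 (X ω), S i ω) ∂ℙ = (∫⁻ ω, F ω ∂ℙ).toReal := hfeq
    _ ≤ (A ^ (1 / p) * B).toReal := ENNReal.toReal_mono hRne hmain
    _ = A.toReal ^ (1 / p) * B.toReal := by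
        rw [ENNReal.toReal_mul, ENNReal.toReal_rpow]
    _ = (∫ ω, (S₀ ω) ^ p ∂ℙ) ^ (1 / p) * ∫ ω, ((X ω : ℝ)) ^ (1 / p) ∂ℙ := by
        rw [hAeq, hBeq]
end

section
/- For the half-order fractional power law distribution X with P(X=k) = (1/2)/(1/2+k) · ∏_{i=1}^{k-1} i/(1/2+i), the probability generating function is E[z^X] = 1 - √((1-z)/z) · arcsin(√z) for z ∈ (0,1). -/
open Finset
open MeasureTheory intervalIntegral Real


noncomputable def II (k : ℕ) : ℝ := ∫ u in (0:ℝ)..1, u^2 * (1-u^2)^k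

lemma II_zero : II 0 = 1/3 := by
  norm_num [II, integral_pow]

lemma contPoly (k : ℕ) : Continuous (fun u : ℝ => u^2 * (1-u^2)^k) := by fun_prop

lemma II_succ (k : ℕ) : (2*(k:ℝ)+5) * II (k+1) = (2*k+2) * II k := by
  have hderiv : ∀ x ∈ Set.uIcc (0:ℝ) 1, HasDerivAt (fun u : ℝ => u^3*(1-u^2)^(k+1))
      ((2*(k:ℝ)+5) * (x^2*(1-x^2)^(k+1)) - (2*k+2) * (x^2*(1-x^2)^k)) x := by
    intro x _
    have h1 : HasDerivAt (fun u : ℝ => 1 - u^2) (-(2*x)) x := by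
      simpa using ((hasDerivAt_pow 2 x).const_sub 1)
    have h2 := (hasDerivAt_pow 3 x).mul (h1.pow (k+1))
    refine h2.congr_deriv ?_
    simp only [Pi.pow_apply]
    have : (1 - x^2)^(k+1) = (1-x^2)^k * (1-x^2) := by ring
    push_cast
    rw [this]
    ring
  have hint : IntervalIntegrable (fun x : ℝ => (2*(k:ℝ)+5) * (x^2*(1-x^2)^(k+1)) - (2*k+2) * (x^2*(1-x^2)^k)) volume 0 1 := by
    apply Continuous.intervalIntegrable; fun_prop
  have := intervalIntegral.integral_eq_sub_of_hasDerivAt hderiv hint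
  simp only [one_pow, zero_pow] at this
  rw [intervalIntegral.integral_sub (by apply Continuous.intervalIntegrable; fun_prop)
      (by apply Continuous.intervalIntegrable; fun_prop),
    intervalIntegral.integral_const_mul, intervalIntegral.integral_const_mul] at this
  have h3 : (1:ℝ)^3*(1-1^2)^(k+1) - 0^3*(1-0^2)^(k+1) = 0 := by norm_num
  rw [← II, ← II] at this
  simp at this
  linarith [this]

lemma coeff_eq (k : ℕ) :
    (1 - ((k + 1 : ℕ) : ℝ) / (1 / 2 + ((k + 1 : ℕ) : ℝ))) *
      ∏ i ∈ Finset.Icc 1 k, (i : ℝ) / (1 / 2 + (i : ℝ)) = II k := by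
  induction k with
  | zero => simp [II_zero]; norm_num
  | succ k ih =>
    rw [Finset.prod_Icc_succ_top (by omega), ← mul_assoc]
    have h1 : (0:ℝ) < 1/2 + ((k:ℝ)+1) := by positivity
    have h2 : (0:ℝ) < 1/2 + ((k:ℝ)+2) := by positivity
    have h5 : (2*(k:ℝ)+5) ≠ 0 := by positivity
    have hI : II (k+1) = (2*(k:ℝ)+2)/(2*(k:ℝ)+5) * II k := by
      field_simp
      linarith [II_succ k]
    rw [hI, ← ih]
    push_cast
    have h1' : (1/2 + ((k:ℝ)+1)) ≠ 0 := ne_of_gt h1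
    have h2' : (1/2 + ((k:ℝ)+1+1)) ≠ 0 := by positivity
    field_simp
    ring

lemma final_integral (z : ℝ) (hz0 : 0 < z) (hz1 : z < 1) :
    ∫ u in (0:ℝ)..1, z*u^2/(1 - z*(1-u^2))
      = 1 - Real.sqrt ((1 - z) / z) * Real.arcsin (Real.sqrt z) := by
  set c := Real.sqrt ((1-z)/z) with hc
  have h1z : (0:ℝ) < 1 - z := by linarith
  have hcpos : 0 < c := Real.sqrt_pos.2 (by positivity)
  have hc2 : c^2 = (1-z)/z := Real.sq_sqrt (by positivity)
  have hden : ∀ u : ℝ, 0 < 1 - z*(1-u^2) := by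
    intro u
    have : z*(1-u^2) ≤ z*1 := by nlinarith [sq_nonneg u]
    nlinarith
  have hderiv : ∀ x ∈ Set.uIcc (0:ℝ) 1,
      HasDerivAt (fun u : ℝ => u - c * Real.arctan (u / c)) (z*x^2/(1 - z*(1-x^2))) x := by
    intro x _
    have h1 : HasDerivAt (fun u : ℝ => u / c) (1/c) x := by
      simpa using (hasDerivAt_id x).div_const c
    have h2 := ((Real.hasDerivAt_arctan (x/c)).comp x h1).const_mul c
    have h3 := (hasDerivAt_id x).sub h2
    refine h3.congr_deriv ?_
    have hx : 1 - z*(1-x^2) = z * (c^2 + x^2) := by rw [hc2]; field_simp; ring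
    rw [hx]
    have hcx : c^2 + x^2 > 0 := by positivity
    field_simp
    ring
  have hint : IntervalIntegrable (fun u : ℝ => z*u^2/(1 - z*(1-u^2))) volume 0 1 := by
    apply Continuous.intervalIntegrable
    exact (continuous_const.mul (continuous_pow 2)).div
      (continuous_const.sub (continuous_const.mul (continuous_const.sub (continuous_pow 2))))
      (fun u => ne_of_gt (hden u))
  rw [intervalIntegral.integral_eq_sub_of_hasDerivAt hderiv hint]
  have harct : Real.arctan (1/c) = Real.arcsin (Real.sqrt z) := by
    rw [Real.arctan_eq_arcsin]
    congr 1
    have h1c : (1:ℝ)/c = Real.sqrt (z/(1-z)) := by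
      rw [hc, one_div, ← Real.sqrt_inv, inv_div]
    rw [h1c]
    have hx2 : Real.sqrt (z/(1-z)) ^ 2 = z/(1-z) := Real.sq_sqrt (by positivity)
    rw [hx2]
    have : 1 + z/(1-z) = (1-z)⁻¹ := by field_simp; ring
    rw [this, Real.sqrt_inv, div_eq_mul_inv, inv_inv]
    rw [← Real.sqrt_mul (by positivity)]
    congr 1
    field_simp
  rw [harct]
  simp

/-- Generating function of the half-order fractional power law distribution
`P(X=k) = (1 - k/(1/2+k)) ∏_{i=1}^{k-1} i/(1/2+i)`: for `z ∈ (0,1)`,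
`E[z^X] = 1 - √((1-z)/z)·arcsin(√z)`. -/
theorem pgf_half_order_power_law (z : ℝ) (hz0 : 0 < z) (hz1 : z < 1) :
    ∑' k : ℕ,
        ((1 - ((k + 1 : ℕ) : ℝ) / (1 / 2 + ((k + 1 : ℕ) : ℝ))) *
          ∏ i ∈ Finset.Icc 1 k, (i : ℝ) / (1 / 2 + (i : ℝ))) * z ^ (k + 1)
      = 1 - Real.sqrt ((1 - z) / z) * Real.arcsin (Real.sqrt z) := by
  set f : ℕ → ℝ → ℝ := fun k u => z^(k+1) * (u^2 * (1-u^2)^k) with hf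
  have step1 : ∀ k : ℕ,
      ((1 - ((k + 1 : ℕ) : ℝ) / (1 / 2 + ((k + 1 : ℕ) : ℝ))) *
        ∏ i ∈ Finset.Icc 1 k, (i : ℝ) / (1 / 2 + (i : ℝ))) * z ^ (k + 1)
      = ∫ u in Set.Ioc (0:ℝ) 1, f k u := by
    intro k
    rw [coeff_eq k, hf]
    simp only
    rw [← intervalIntegral.integral_of_le zero_le_one,
      intervalIntegral.integral_const_mul, ← II]
    ring
  rw [tsum_congr step1]
  rw [← MeasureTheory.integral_tsum]
  · rw [MeasureTheory.setIntegral_congr_fun measurableSet_Ioc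
        (g := fun u => z*u^2/(1 - z*(1-u^2)))]
    · rw [← intervalIntegral.integral_of_le zero_le_one]
      exact final_integral z hz0 hz1
    · rintro u ⟨hu0, hu1⟩
      have hu2 : u^2 ≤ 1 := by nlinarith
      have hr0 : 0 ≤ z*(1-u^2) := mul_nonneg hz0.le (by linarith)
      have hr1 : z*(1-u^2) < 1 := by nlinarith
      have hg := (hasSum_geometric_of_lt_one hr0 hr1).mul_left (z * u^2)
      have hfe : (fun k => f k u) = fun k => z*u^2 * (z*(1-u^2))^k := by
        funext k; simp only [hf]; rw [mul_pow]; ring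
      have hs : HasSum (fun k => f k u) (z * u^2 * (1 - z*(1-u^2))⁻¹) := hfe ▸ hg
      show (∑' k, f k u) = z*u^2/(1 - z*(1-u^2))
      rw [hs.tsum_eq, div_eq_mul_inv]
  · intro k
    exact (Continuous.aestronglyMeasurable (by fun_prop)).restrict
  · apply ne_of_lt
    have hb : ∀ k : ℕ, (∫⁻ u in Set.Ioc (0:ℝ) 1, ‖f k u‖₊) ≤ ENNReal.ofReal z ^ (k+1) := by
      intro k
      have hpt : ∀ u ∈ Set.Ioc (0:ℝ) 1, (‖f k u‖₊ : ENNReal) ≤ ENNReal.ofReal (z^(k+1)) := by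
        rintro u ⟨hu0, hu1⟩
        have hu2 : u^2 ≤ 1 := by nlinarith
        have h1 : (0:ℝ) ≤ u^2 * (1-u^2)^k := mul_nonneg (sq_nonneg u) (pow_nonneg (by nlinarith) k)
        have h3 : (1-u^2)^k ≤ 1 := pow_le_one₀ (by nlinarith) (by nlinarith)
        have h2 : u^2 * (1-u^2)^k ≤ 1 := by
          nlinarith [pow_nonneg (by nlinarith : (0:ℝ) ≤ 1-u^2) k, sq_nonneg u]
        have hfk : 0 ≤ f k u := by simp only [hf]; nlinarith [pow_pos hz0 (k+1)]
        rw [← enorm_eq_nnnorm, Real.enorm_eq_ofReal hfk]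
        apply ENNReal.ofReal_le_ofReal
        simp only [hf]
        nlinarith [pow_pos hz0 (k+1)]
      calc (∫⁻ u in Set.Ioc (0:ℝ) 1, ‖f k u‖₊)
          ≤ ∫⁻ _ in Set.Ioc (0:ℝ) 1, ENNReal.ofReal (z^(k+1)) :=
            MeasureTheory.setLIntegral_mono (by fun_prop) hpt
        _ = ENNReal.ofReal (z^(k+1)) := by simp [Real.volume_Ioc]
        _ = ENNReal.ofReal z ^ (k+1) := ENNReal.ofReal_pow hz0.le (k+1)
    have hzlt : ENNReal.ofReal z < 1 := by
      rw [← ENNReal.ofReal_one]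
      exact (ENNReal.ofReal_lt_ofReal_iff_of_nonneg hz0.le).2 hz1
    calc ∑' k, ∫⁻ u in Set.Ioc (0:ℝ) 1, ‖f k u‖₊
        ≤ ∑' k : ℕ, ENNReal.ofReal z ^ (k+1) := ENNReal.tsum_le_tsum hb
      _ ≤ ∑' k : ℕ, ENNReal.ofReal z ^ k := by
          apply ENNReal.tsum_le_tsum
          intro k
          rw [pow_succ]
          exact mul_le_of_le_one_right' hzlt.le
      _ < ⊤ := by
          rw [ENNReal.tsum_geometric]
          exact ENNReal.inv_lt_top.2 (by simpa using hzlt)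
end

section
/- For the M^X/M/∞ queue with batch size distribution X and i.i.d. exponential(μ) service times, the integral ∫_0^∞ (1 - φ(z e^{-μs} + 1 - e^{-μs})) ds equals (1/μ) ∑_{n=1}^∞ ((1-z^n)/n) P(X ≥ n) for z ∈ [0,1), where φ is the generating function of X. -/
open MeasureTheory ProbabilityTheory Finset
open scoped ENNReal Topology

section MxmAux
open Filter

lemma mxm_w_nonneg {μ z : ℝ} (hμ : 0 < μ) (hz0 : 0 ≤ z) (s : ℝ) (hs : 0 < s) :
    0 ≤ 1 - (1 - z) * Real.exp (-μ * s) ∧ (1 - z) * Real.exp (-μ * s) ≤ 1 := by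
  have he : Real.exp (-μ * s) ≤ 1 := by
    apply Real.exp_le_one_iff.mpr; nlinarith
  have h4 : (1 - z) * Real.exp (-μ * s) ≤ 1 := by nlinarith [Real.exp_pos (-μ * s)]
  exact ⟨by linarith, h4⟩

lemma mxm_aux_integral {μ z : ℝ} (hμ : 0 < μ) (hz0 : 0 ≤ z) (hz1 : z < 1) (j : ℕ) :
    IntegrableOn (fun s => (1 - z) * Real.exp (-μ * s) * (1 - (1 - z) * Real.exp (-μ * s)) ^ j)
      (Set.Ioi (0:ℝ)) ∧
    ∫ s in Set.Ioi (0:ℝ), (1 - z) * Real.exp (-μ * s) * (1 - (1 - z) * Real.exp (-μ * s)) ^ j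
      = (1 - z ^ (j+1)) / (((j:ℝ)+1) * μ) := by
  set w : ℝ → ℝ := fun s => 1 - (1 - z) * Real.exp (-μ * s) with hw
  set g : ℝ → ℝ := fun s => (w s) ^ (j+1) * ((((j:ℝ)+1) * μ)⁻¹) with hg
  have hj1 : (0:ℝ) < (j:ℝ) + 1 := by positivity
  have hwd : ∀ s : ℝ, HasDerivAt w ((1 - z) * μ * Real.exp (-μ * s)) s := by
    intro s
    have h1 : HasDerivAt (fun s : ℝ => -μ * s) (-μ) s := (hasDerivAt_id s).const_mul (-μ) |>.congr_deriv (by ring)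
    have h2 := h1.exp
    have h3 := (h2.const_mul (1 - z)).const_sub 1
    refine h3.congr_deriv ?_
    ring
  have hgd : ∀ s : ℝ, HasDerivAt g ((1 - z) * Real.exp (-μ * s) * (w s) ^ j) s := by
    intro s
    have := ((hwd s).pow (j+1)).mul_const ((((j:ℝ)+1) * μ)⁻¹)
    refine this.congr_deriv ?_
    have hne : ((j:ℝ)+1) * μ ≠ 0 := by positivity
    simp only [Nat.add_sub_cancel, Nat.cast_add, Nat.cast_one]
    field_simp
  have hwle : ∀ s : ℝ, 0 < s → 0 ≤ w s := fun s hs => (mxm_w_nonneg hμ hz0 s hs).1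
  have hpos : ∀ s ∈ Set.Ioi (0:ℝ), 0 ≤ (1 - z) * Real.exp (-μ * s) * (w s) ^ j := by
    intro s hs
    exact mul_nonneg (mul_nonneg (by linarith) (Real.exp_pos _).le) (pow_nonneg (hwle s hs) j)
  have htend : Tendsto g atTop (𝓝 ((((j:ℝ)+1) * μ)⁻¹)) := by
    have h0 : Tendsto (fun s : ℝ => -μ * s) atTop atBot := by
      apply Tendsto.const_mul_atTop_of_neg (by linarith : -μ < 0) tendsto_id
    have h1 : Tendsto (fun s : ℝ => Real.exp (-μ * s)) atTop (𝓝 0) :=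
      Real.tendsto_exp_atBot.comp h0
    have h2 : Tendsto w atTop (𝓝 1) := by
      have := (h1.const_mul (1 - z)).const_sub 1
      simpa [hw, neg_mul] using this
    have h3 : Tendsto (fun s => (w s) ^ (j+1)) atTop (𝓝 1) := by
      simpa using h2.pow (j+1)
    have h4 := h3.mul_const ((((j:ℝ)+1) * μ)⁻¹)
    simpa [hg] using h4
  have hcont : ContinuousWithinAt g (Set.Ici 0) 0 := ((hgd 0).continuousAt).continuousWithinAt
  have hg0 : g 0 = z ^ (j+1) * ((((j:ℝ)+1) * μ)⁻¹) := by
    simp [hg, hw]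
  constructor
  · exact integrableOn_Ioi_deriv_of_nonneg hcont (fun s _ => hgd s) hpos htend
  · rw [integral_Ioi_of_hasDerivAt_of_nonneg hcont (fun s _ => hgd s) hpos htend, hg0]
    rw [div_eq_mul_inv]
    ring

lemma mxm_aux_lintegral {μ z : ℝ} (hμ : 0 < μ) (hz0 : 0 ≤ z) (hz1 : z < 1) (k : ℕ) :
    ∫⁻ s in Set.Ioi (0:ℝ),
        ENNReal.ofReal (1 - (1 - (1 - z) * Real.exp (-μ * s)) ^ k)
      = ∑ j ∈ Finset.range k, ENNReal.ofReal ((1 - z ^ (j+1)) / (((j:ℝ)+1) * μ)) := by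
  have key : ∀ s ∈ Set.Ioi (0:ℝ),
      1 - (1 - (1 - z) * Real.exp (-μ * s)) ^ k
        = ∑ j ∈ Finset.range k, (1 - z) * Real.exp (-μ * s) * (1 - (1 - z) * Real.exp (-μ * s)) ^ j := by
    intro s _
    have h3 := geom_sum_mul (1 - (1 - z) * Real.exp (-μ * s)) k
    rw [Finset.sum_congr rfl (fun j (_ : j ∈ Finset.range k) =>
      (by ring : (1 - z) * Real.exp (-μ * s) * (1 - (1 - z) * Real.exp (-μ * s)) ^ j
        = (1 - (1 - z) * Real.exp (-μ * s)) ^ j * ((1 - z) * Real.exp (-μ * s))))]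
    rw [← Finset.sum_mul]
    linear_combination h3
  calc ∫⁻ s in Set.Ioi (0:ℝ), ENNReal.ofReal (1 - (1 - (1 - z) * Real.exp (-μ * s)) ^ k)
      = ∫⁻ s in Set.Ioi (0:ℝ), ∑ j ∈ Finset.range k,
          ENNReal.ofReal ((1 - z) * Real.exp (-μ * s) * (1 - (1 - z) * Real.exp (-μ * s)) ^ j) := by
        apply setLIntegral_congr_fun measurableSet_Ioi
        intro s hs
        beta_reduce
        rw [key s hs]
        apply ENNReal.ofReal_sum_of_nonneg
        intro j _
        have hw := (mxm_w_nonneg hμ hz0 s hs).1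
        exact mul_nonneg (mul_nonneg (by linarith) (Real.exp_pos _).le) (pow_nonneg hw j)
    _ = ∑ j ∈ Finset.range k, ∫⁻ s in Set.Ioi (0:ℝ),
          ENNReal.ofReal ((1 - z) * Real.exp (-μ * s) * (1 - (1 - z) * Real.exp (-μ * s)) ^ j) := by
        apply lintegral_finset_sum
        intro j _
        apply ENNReal.measurable_ofReal.comp
        fun_prop
    _ = ∑ j ∈ Finset.range k, ENNReal.ofReal ((1 - z ^ (j+1)) / (((j:ℝ)+1) * μ)) := by
        apply Finset.sum_congr rfl
        intro j _
        rw [← (mxm_aux_integral hμ hz0 hz1 j).2]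
        rw [← ofReal_integral_eq_lintegral_ofReal (mxm_aux_integral hμ hz0 hz1 j).1]
        filter_upwards [ae_restrict_mem measurableSet_Ioi] with s hs
        have hw := (mxm_w_nonneg hμ hz0 s hs).1
        exact mul_nonneg (mul_nonneg (by linarith) (Real.exp_pos _).le) (pow_nonneg hw j)

end MxmAux

/-- For the `M^X/M/∞` queue with batch-size distribution `X` (positive-integer
valued, generating function `φ(w) = E[w^X]`) and i.i.d. exponential(`μ`)
service times, for `z ∈ [0,1)`:
`∫_0^∞ (1 - φ(z e^{-μs} + 1 - e^{-μs})) ds = (1/μ) ∑_{n≥1} ((1-z^n)/n) P(X ≥ n)`,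
both sides possibly infinite. -/
theorem mxm_infty_integral_identity {Ω : Type*} [MeasureSpace Ω]
    [IsProbabilityMeasure (ℙ : Measure Ω)]
    (X : Ω → ℕ) (hXm : Measurable X) (hXpos : ∀ ω, 1 ≤ X ω)
    (μ : ℝ) (hμ : 0 < μ) (z : ℝ) (hz0 : 0 ≤ z) (hz1 : z < 1) :
    ∫⁻ s in Set.Ioi (0 : ℝ),
        ENNReal.ofReal (1 - ∫ ω, (z * Real.exp (-μ * s) + (1 - Real.exp (-μ * s))) ^ (X ω) ∂ℙ)
      = ENNReal.ofReal (1 / μ) *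
          ∑' n : ℕ, ENNReal.ofReal ((1 - z ^ (n + 1)) / ((n : ℝ) + 1)) *
            ℙ {ω | n + 1 ≤ X ω} := by
  have hbase : ∀ s : ℝ, z * Real.exp (-μ * s) + (1 - Real.exp (-μ * s))
      = 1 - (1 - z) * Real.exp (-μ * s) := fun s => by ring
  simp_rw [hbase]
  set a : ℕ → ℝ≥0∞ := fun j => ENNReal.ofReal ((1 - z ^ (j+1)) / (((j:ℝ)+1) * μ)) with ha
  have hwmeas : Measurable fun s : ℝ => 1 - (1 - z) * Real.exp (-μ * s) := by fun_prop
  have hfmeas : ∀ s : ℝ, Measurable fun ω => (1 - (1 - z) * Real.exp (-μ * s)) ^ (X ω) :=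
    fun s => measurable_const.pow hXm
  have hbound : ∀ s : ℝ, 0 < s → ∀ ω, 0 ≤ (1 - (1 - z) * Real.exp (-μ * s)) ^ (X ω) ∧
      (1 - (1 - z) * Real.exp (-μ * s)) ^ (X ω) ≤ 1 := by
    intro s hs ω
    obtain ⟨h1, h2⟩ := mxm_w_nonneg hμ hz0 s hs
    exact ⟨pow_nonneg h1 _, pow_le_one₀ h1 (by nlinarith [Real.exp_pos (-μ * s)])⟩
  have hint : ∀ s : ℝ, 0 < s → Integrable (fun ω => (1 - (1 - z) * Real.exp (-μ * s)) ^ (X ω)) ℙ := by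
    intro s hs
    refine (integrable_const (1:ℝ)).mono' (hfmeas s).aestronglyMeasurable ?_
    filter_upwards with ω
    obtain ⟨h1, h2⟩ := hbound s hs ω
    rw [Real.norm_eq_abs, abs_of_nonneg h1]
    exact h2
  calc ∫⁻ s in Set.Ioi (0:ℝ),
        ENNReal.ofReal (1 - ∫ ω, (1 - (1 - z) * Real.exp (-μ * s)) ^ (X ω) ∂ℙ)
      = ∫⁻ s in Set.Ioi (0:ℝ), ∫⁻ ω,
          ENNReal.ofReal (1 - (1 - (1 - z) * Real.exp (-μ * s)) ^ (X ω)) ∂ℙ := by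
        apply setLIntegral_congr_fun measurableSet_Ioi
        intro s hs
        beta_reduce
        have h1 : ∫ ω, (1 - (1 - (1 - z) * Real.exp (-μ * s)) ^ (X ω)) ∂ℙ
            = 1 - ∫ ω, (1 - (1 - z) * Real.exp (-μ * s)) ^ (X ω) ∂ℙ := by
          rw [integral_sub (integrable_const 1) (hint s hs), integral_const]
          simp
        rw [← h1]
        apply ofReal_integral_eq_lintegral_ofReal ((integrable_const 1).sub (hint s hs))
        filter_upwards with ω
        have := (hbound s hs ω).2
        simp only [Pi.zero_apply, Pi.sub_apply]
        linarith
    _ = ∫⁻ ω, ∫⁻ s in Set.Ioi (0:ℝ),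
          ENNReal.ofReal (1 - (1 - (1 - z) * Real.exp (-μ * s)) ^ (X ω)) ∂ℙ := by
        apply lintegral_lintegral_swap
        apply Measurable.aemeasurable
        apply ENNReal.measurable_ofReal.comp
        exact measurable_const.sub ((hwmeas.comp measurable_fst).pow (hXm.comp measurable_snd))
    _ = ∫⁻ ω, ∑ j ∈ Finset.range (X ω), a j ∂ℙ := by
        apply lintegral_congr
        intro ω
        exact mxm_aux_lintegral hμ hz0 hz1 (X ω)
    _ = ∫⁻ ω, ∑' j : ℕ, (if j < X ω then a j else 0) ∂ℙ := by
        apply lintegral_congr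
        intro ω
        rw [tsum_eq_sum (s := Finset.range (X ω)) (fun j hj => if_neg (by simpa using hj))]
        exact (Finset.sum_congr rfl fun j hj => (if_pos (Finset.mem_range.mp hj)).symm)
    _ = ∑' j : ℕ, ∫⁻ ω, (if j < X ω then a j else 0) ∂ℙ := by
        apply lintegral_tsum
        intro j
        exact (Measurable.ite (hXm measurableSet_Ioi) measurable_const measurable_const).aemeasurable
    _ = ∑' j : ℕ, a j * ℙ {ω | j + 1 ≤ X ω} := by
        apply tsum_congr
        intro j
        have hset : MeasurableSet {ω | j < X ω} := hXm measurableSet_Ioi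
        have : (fun ω => if j < X ω then a j else 0)
            = Set.indicator {ω | j < X ω} (fun _ => a j) := by
          funext ω
          simp [Set.indicator_apply, Set.mem_setOf_eq]
        rw [this, lintegral_indicator hset, setLIntegral_const]
        rfl
    _ = ENNReal.ofReal (1 / μ) *
          ∑' n : ℕ, ENNReal.ofReal ((1 - z ^ (n + 1)) / ((n : ℝ) + 1)) * ℙ {ω | n + 1 ≤ X ω} := by
        rw [← ENNReal.tsum_mul_left]
        apply tsum_congr
        intro n
        have hr : (1 - z ^ (n+1)) / (((n:ℝ)+1) * μ) = (1/μ) * ((1 - z ^ (n+1)) / ((n:ℝ)+1)) := by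
          rw [one_div, div_mul_eq_div_div_swap, div_eq_inv_mul]
          ring
        rw [ha]
        simp only []
        rw [hr, ENNReal.ofReal_mul (by positivity : (0:ℝ) ≤ 1/μ), mul_assoc]
end
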